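/- arXiv:2209.14530 — 4 statements merged into one kernel-verified Lean document; each statement's English description precedes it below -/
import Mathlib

section
/- For every n-qubit pure state ψ, the stabilizer extent is at least the inverse of the stabilizer fidelity: ξ(ψ) · F_𝒮(ψ) ≥ 1. -/
open scoped BigOperators
open Finset

noncomputable section

/-- Length-`n` bit strings, i.e. `𝔽₂ⁿ`. -/
abbrev BV (n : ℕ) := Fin n → ZMod 2

/-- Integer-valued inner product: number of coordinates where both strings are 1. -/
def bdot {n : ℕ} (p q : BV n) : ℕ :=
  (Finset.univ.filter (fun i => p i = 1 ∧ q i = 1)).card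

/-- The Weyl operator `W_x` for `x = (p, q) ∈ 𝔽₂^{2n}`:
`W_x |b⟩ = i^{p·q} (−1)^{q·b} |b ⊕ p⟩`. -/
def Weyl {n : ℕ} (x : BV n × BV n) : Matrix (BV n) (BV n) ℂ :=
  Matrix.of fun r c => if r = c + x.1 then Complex.I ^ bdot x.1 x.2 * (-1 : ℂ) ^ bdot x.2 c else 0

/-- `⟨ψ|W_x|ψ⟩`. -/
def weylExp {n : ℕ} (ψ : BV n → ℂ) (x : BV n × BV n) : ℂ :=
  ∑ r : BV n, (starRingEnd ℂ) (ψ r) * ((Weyl x).mulVec ψ r)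

/-- `ψ` is an `n`-qubit pure state, i.e. a unit vector in `ℂ^{2ⁿ}`. -/
def IsState {n : ℕ} (ψ : BV n → ℂ) : Prop :=
  ∑ b : BV n, ‖ψ b‖ ^ 2 = 1

/-- The characteristic distribution `p_ψ(x) = 2^{−n} |⟨ψ|W_x|ψ⟩|²`. -/
def charDist {n : ℕ} (ψ : BV n → ℂ) (x : BV n × BV n) : ℝ :=
  (2 ^ n : ℝ)⁻¹ * ‖weylExp ψ x‖ ^ 2

/-- The Weyl distribution `q_ψ(x) = Σ_y p_ψ(y) p_ψ(x ⊕ y)`. -/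
def weylDist {n : ℕ} (ψ : BV n → ℂ) (x : BV n × BV n) : ℝ :=
  ∑ y : BV n × BV n, charDist ψ y * charDist ψ (x + y)

/-- Fourier coefficient `f̂(s) = 4^{−n} Σ_x f(x) (−1)^{x·s}` for `f : 𝔽₂^{2n} → ℝ`. -/
def booleanFourier {n : ℕ} (f : BV n × BV n → ℝ) (s : BV n × BV n) : ℝ :=
  (4 ^ n : ℝ)⁻¹ * ∑ x : BV n × BV n, f x * (-1 : ℝ) ^ (bdot x.1 s.1 + bdot x.2 s.2)

/-- The Hadamard gate on qubit `j`. -/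
def Hgate {n : ℕ} (j : Fin n) : Matrix (BV n) (BV n) ℂ :=
  Matrix.of fun r c =>
    if ∀ i, i ≠ j → r i = c i then
      (((Real.sqrt 2 : ℝ) : ℂ))⁻¹ * (-1 : ℂ) ^ ((r j).val * (c j).val)
    else 0

/-- The phase gate `S = diag(1, i)` on qubit `j`. -/
def Sgate {n : ℕ} (j : Fin n) : Matrix (BV n) (BV n) ℂ :=
  Matrix.of fun r c => if r = c then Complex.I ^ (r j).val else 0

/-- The CNOT gate with control qubit `j` and target qubit `k`. -/
def CNOTgate {n : ℕ} (j k : Fin n) : Matrix (BV n) (BV n) ℂ :=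
  Matrix.of fun r c => if r = Function.update c k (c k + c j) then 1 else 0

/-- The generators of the `n`-qubit Clifford group. -/
def cliffordGens (n : ℕ) : Set (Matrix (BV n) (BV n) ℂ) :=
  {M | (∃ j, M = Hgate j) ∨ (∃ j, M = Sgate j) ∨ (∃ j k, j ≠ k ∧ M = CNOTgate j k)}

/-- The `n`-qubit Clifford group `𝒞ₙ`: all finite products of the generators.
(Each generator has finite order, so this coincides with the generated group.) -/
def CliffordGroup (n : ℕ) : Submonoid (Matrix (BV n) (BV n) ℂ) :=
  Submonoid.closure (cliffordGens n)

/-- The all-zeros basis state `|0ⁿ⟩`. -/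
def e0 {n : ℕ} : BV n → ℂ := fun b => if b = 0 then 1 else 0

/-- The set of `n`-qubit stabilizer states `𝒮ₙ = {C|0ⁿ⟩ : C ∈ 𝒞ₙ}`. -/
def stabStates (n : ℕ) : Set (BV n → ℂ) :=
  {φ | ∃ C ∈ CliffordGroup n, φ = C.mulVec e0}

/-- The inner product `⟨φ|ψ⟩`. -/
def innerC {n : ℕ} (φ ψ : BV n → ℂ) : ℂ := ∑ b : BV n, (starRingEnd ℂ) (φ b) * ψ b

/-- The stabilizer fidelity `F_𝒮(ψ) = max_{φ ∈ 𝒮ₙ} |⟨φ|ψ⟩|²`. -/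
def stabFidelity {n : ℕ} (ψ : BV n → ℂ) : ℝ :=
  sSup {r | ∃ φ ∈ stabStates n, r = ‖innerC φ ψ‖ ^ 2}

/-- The stabilizer extent `ξ(ψ)`: the minimum of `(Σᵢ |cᵢ|)²` over all finite
decompositions `ψ = Σᵢ cᵢ φᵢ` with stabilizer states `φᵢ`. -/
def stabExtent {n : ℕ} (ψ : BV n → ℂ) : ℝ :=
  sInf {r | ∃ (m : ℕ) (c : Fin m → ℂ) (φ : Fin m → (BV n → ℂ)),
    (∀ i, φ i ∈ stabStates n) ∧ ψ = ∑ i, c i • φ i ∧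
    r = (∑ i, ‖c i‖) ^ 2}

/-- The T-gate `T = diag(1, e^{iπ/4})` on qubit `j`. -/
def Tgate {n : ℕ} (j : Fin n) : Matrix (BV n) (BV n) ℂ :=
  Matrix.of fun r c => if r = c then Complex.exp (Complex.I * Real.pi / 4) ^ (r j).val else 0

/-- The `m`-fold tensor power `|T⟩^{⊗m}` of `|T⟩ = (|0⟩ + e^{iπ/4}|1⟩)/√2`. -/
def TstateM (m : ℕ) : BV m → ℂ :=
  fun b => ∏ i : Fin m, ((((Real.sqrt 2 : ℝ) : ℂ))⁻¹ * Complex.exp (Complex.I * Real.pi / 4) ^ (b i).val)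

end


noncomputable section Aux
open Matrix

variable {n : ℕ}

lemma zmod2_cases (a : ZMod 2) : a = 0 ∨ a = 1 := by revert a; decide

lemma sum_zmod2 {M : Type*} [AddCommMonoid M] (g : ZMod 2 → M) :
    ∑ a : ZMod 2, g a = g 0 + g 1 := by
  have h : (Finset.univ : Finset (ZMod 2)) = {0, 1} := by decide
  rw [h, Finset.sum_insert (by decide), Finset.sum_singleton]

lemma sum_bv_update (j : Fin n) (r : BV n) (f : BV n → ℂ)
    (hf : ∀ k : BV n, (∃ i, i ≠ j ∧ k i ≠ r i) → f k = 0) :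
    ∑ k : BV n, f k = ∑ a : ZMod 2, f (Function.update r j a) := by
  have hinj : ∀ a ∈ (Finset.univ : Finset (ZMod 2)), ∀ b ∈ (Finset.univ : Finset (ZMod 2)),
      Function.update r j a = Function.update r j b → a = b := by
    intro a _ b _ h
    have := congrFun h j
    simpa using this
  have h2 : ∑ a : ZMod 2, f (Function.update r j a)
      = ∑ k ∈ Finset.univ.image (fun a : ZMod 2 => Function.update r j a), f k :=
    (Finset.sum_image hinj).symm
  rw [h2]
  refine (Finset.sum_subset (Finset.subset_univ _) ?_).symm
  intro k _ hk
  refine hf k ?_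
  by_contra hcon
  push_neg at hcon
  refine hk (Finset.mem_image.2 ⟨k j, Finset.mem_univ _, ?_⟩)
  funext i
  by_cases hij : i = j
  · subst hij; simp
  · rw [Function.update_of_ne hij]
    exact (hcon i hij).symm


lemma sqrt2_inv_sq : (((Real.sqrt 2 : ℝ) : ℂ))⁻¹ * (((Real.sqrt 2 : ℝ) : ℂ))⁻¹ = 2⁻¹ := by
  rw [← mul_inv]
  have h : ((Real.sqrt 2 : ℝ) : ℂ) * ((Real.sqrt 2 : ℝ) : ℂ) = 2 := by
    norm_cast
    exact Real.mul_self_sqrt (by norm_num)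
  rw [h]

/-- The X gate on qubit `j`. -/
def Xg (j : Fin n) : Matrix (BV n) (BV n) ℂ :=
  Matrix.of fun r c => if r = Function.update c j (c j + 1) then 1 else 0

lemma Sgate_mul_apply (j : Fin n) (M : Matrix (BV n) (BV n) ℂ) (r c : BV n) :
    (Sgate j * M) r c = Complex.I ^ (r j).val * M r c := by
  rw [Matrix.mul_apply, Finset.sum_eq_single r]
  · simp [Sgate]
  · intro k _ hk
    simp [Sgate, Ne.symm hk]
  · simp

lemma HSSH (j : Fin n) : Hgate j * (Sgate j * (Sgate j * Hgate j)) = Xg (n := n) j := by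
  ext r c
  rw [Matrix.mul_apply]
  have hmid : ∀ k : BV n, Hgate j r k * (Sgate j * (Sgate j * Hgate j)) k c
      = Hgate j r k * ((-1 : ℂ) ^ (k j).val * Hgate j k c) := by
    intro k
    rw [Sgate_mul_apply, Sgate_mul_apply]
    have h : Complex.I ^ (k j).val * (Complex.I ^ (k j).val * Hgate j k c)
        = (-1 : ℂ) ^ (k j).val * Hgate j k c := by
      rw [← mul_assoc, ← pow_add, ← two_mul, pow_mul, Complex.I_sq]
    rw [h]
  rw [Finset.sum_congr rfl fun k _ => hmid k]
  rw [sum_bv_update j r _ (by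
    intro k ⟨i, hij, hki⟩
    have : Hgate j r k = 0 := by
      simp only [Hgate, Matrix.of_apply, ite_eq_right_iff]
      intro h
      exact absurd (h i hij).symm hki
    rw [this, zero_mul])]
  rw [sum_zmod2]
  by_cases hag : ∀ i, i ≠ j → r i = c i
  · have h1 : ∀ a : ZMod 2, Hgate j r (Function.update r j a)
        = (((Real.sqrt 2 : ℝ) : ℂ))⁻¹ * (-1 : ℂ) ^ ((r j).val * a.val) := by
      intro a
      simp only [Hgate, Matrix.of_apply]
      rw [if_pos (by intro i hij; rw [Function.update_of_ne hij]), Function.update_self]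
    have h2 : ∀ a : ZMod 2, Hgate j (Function.update r j a) c
        = (((Real.sqrt 2 : ℝ) : ℂ))⁻¹ * (-1 : ℂ) ^ (a.val * (c j).val) := by
      intro a
      simp only [Hgate, Matrix.of_apply]
      rw [if_pos (by intro i hij; rw [Function.update_of_ne hij]; exact hag i hij),
        Function.update_self]
    rw [h1, h1, h2, h2, Function.update_self, Function.update_self]
    have hiff : (r = Function.update c j (c j + 1)) ↔ r j = c j + 1 := by
      constructor
      · intro h; rw [h, Function.update_self]
      · intro h
        funext i
        by_cases hij : i = j
        · subst hij; rw [Function.update_self]; exact h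
        · rw [Function.update_of_ne hij]; exact hag i hij
    show _ = Xg j r c
    simp only [Xg, Matrix.of_apply]
    rw [if_congr hiff rfl rfl]
    rcases zmod2_cases (r j) with h1'|h1' <;> rcases zmod2_cases (c j) with h2'|h2' <;>
        rw [h1', h2'] <;>
        simp only [ZMod.val_zero, ZMod.val_one, mul_zero, zero_mul, mul_one, one_mul,
          pow_zero, pow_one]
    · rw [if_neg (by decide)]; ring
    · rw [if_pos (by decide)]; linear_combination 2 * sqrt2_inv_sq
    · rw [if_pos (by decide)]; linear_combination 2 * sqrt2_inv_sq
    · rw [if_neg (by decide)]; ring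
  · push_neg at hag
    obtain ⟨i, hij, hne⟩ := hag
    have h2 : ∀ a : ZMod 2, Hgate j (Function.update r j a) c = 0 := by
      intro a
      simp only [Hgate, Matrix.of_apply, ite_eq_right_iff]
      intro h
      exact absurd ((Function.update_of_ne hij _ _).symm.trans (h i hij)) hne
    have hx : Xg j r c = 0 := by
      simp only [Xg, Matrix.of_apply, ite_eq_right_iff]
      intro h
      exact absurd ((congrFun h i).trans (Function.update_of_ne hij _ _)) hne
    rw [h2, h2, hx]
    ring


lemma S_unitary (j : Fin n) : (Sgate (n := n) j)ᴴ * Sgate j = 1 := by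
  ext r c
  rw [Matrix.mul_apply, Finset.sum_eq_single r]
  · rw [Matrix.conjTranspose_apply]
    by_cases h : r = c
    · subst h
      simp only [Sgate, Matrix.of_apply, if_pos rfl, if_true, Matrix.one_apply_eq]
      rw [star_pow, Complex.star_def, Complex.conj_I, ← mul_pow]
      have h2 : (-Complex.I) * Complex.I = 1 := by
        rw [neg_mul, Complex.I_mul_I, neg_neg]
      rw [h2, one_pow]
    · simp [Sgate, Matrix.one_apply, h]
  · intro k _ hk
    rw [Matrix.conjTranspose_apply]
    simp [Sgate, hk]
  · simp

lemma H_unitary (j : Fin n) : (Hgate (n := n) j)ᴴ * Hgate j = 1 := by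
  ext r c
  rw [Matrix.mul_apply]
  simp only [Matrix.conjTranspose_apply]
  have hconj : ∀ k, star (Hgate (n := n) j k r) = Hgate j k r := by
    intro k
    simp only [Hgate, Matrix.of_apply, apply_ite (star : ℂ → ℂ), star_zero, star_mul',
      star_pow, star_neg, star_one, star_inv₀]
    rw [Complex.star_def, Complex.conj_ofReal]
  rw [Finset.sum_congr rfl fun k _ => by rw [hconj]]
  rw [sum_bv_update j r _ (by
    intro k ⟨i, hij, hki⟩
    have : Hgate j k r = 0 := by
      simp only [Hgate, Matrix.of_apply, ite_eq_right_iff]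
      intro h
      exact absurd (h i hij) hki
    rw [this, zero_mul])]
  rw [sum_zmod2]
  have h1 : ∀ a : ZMod 2, Hgate j (Function.update r j a) r
      = (((Real.sqrt 2 : ℝ) : ℂ))⁻¹ * (-1 : ℂ) ^ (a.val * (r j).val) := by
    intro a
    simp only [Hgate, Matrix.of_apply]
    rw [if_pos (by intro i hij; rw [Function.update_of_ne hij]), Function.update_self]
  by_cases hag : ∀ i, i ≠ j → r i = c i
  · have h2 : ∀ a : ZMod 2, Hgate j (Function.update r j a) c
        = (((Real.sqrt 2 : ℝ) : ℂ))⁻¹ * (-1 : ℂ) ^ (a.val * (c j).val) := by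
      intro a
      simp only [Hgate, Matrix.of_apply]
      rw [if_pos (by intro i hij; rw [Function.update_of_ne hij]; exact hag i hij),
        Function.update_self]
    rw [h1, h1, h2, h2]
    have hiff : (r = c) ↔ r j = c j := by
      constructor
      · intro h; rw [h]
      · intro h
        funext i
        by_cases hij : i = j
        · subst hij; exact h
        · exact hag i hij
    rw [Matrix.one_apply, if_congr hiff rfl rfl]
    rcases zmod2_cases (r j) with h1'|h1' <;> rcases zmod2_cases (c j) with h2'|h2' <;>
        rw [h1', h2'] <;>
        simp only [ZMod.val_zero, ZMod.val_one, mul_zero, zero_mul, mul_one, one_mul,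
          pow_zero, pow_one]
    · rw [if_pos True.intro]; linear_combination 2 * sqrt2_inv_sq
    · rw [if_neg (by decide)]; ring
    · rw [if_neg (by decide)]; ring
    · rw [if_pos True.intro]; linear_combination 2 * sqrt2_inv_sq
  · push_neg at hag
    obtain ⟨i, hij, hne⟩ := hag
    have h2 : ∀ a : ZMod 2, Hgate j (Function.update r j a) c = 0 := by
      intro a
      simp only [Hgate, Matrix.of_apply, ite_eq_right_iff]
      intro h
      exact absurd ((Function.update_of_ne hij _ _).symm.trans (h i hij)) hne
    have hx : (1 : Matrix (BV n) (BV n) ℂ) r c = 0 := by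
      rw [Matrix.one_apply, if_neg]
      intro h
      exact hne (congrFun h i)
    rw [h2, h2, hx]
    ring

lemma CNOT_unitary (j k : Fin n) (hjk : j ≠ k) :
    (CNOTgate (n := n) j k)ᴴ * CNOTgate j k = 1 := by
  ext r c
  rw [Matrix.mul_apply]
  simp only [Matrix.conjTranspose_apply, CNOTgate, Matrix.of_apply]
  have hterm : ∀ m : BV n,
      star (if m = Function.update r k (r k + r j) then (1 : ℂ) else 0) *
        (if m = Function.update c k (c k + c j) then (1 : ℂ) else 0)
      = if m = Function.update r k (r k + r j) then
          (if m = Function.update c k (c k + c j) then (1 : ℂ) else 0) else 0 := by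
    intro m
    split_ifs <;> simp
  rw [Finset.sum_congr rfl fun m _ => hterm m, Finset.sum_ite_eq' Finset.univ,
    if_pos (Finset.mem_univ _)]
  have hiff : (Function.update r k (r k + r j) = Function.update c k (c k + c j)) ↔ r = c := by
    constructor
    · intro h
      have hoff : ∀ i, i ≠ k → r i = c i := by
        intro i hik
        have := congrFun h i
        rwa [Function.update_of_ne hik, Function.update_of_ne hik] at this
      have hk' : r k = c k := by
        have := congrFun h k
        rw [Function.update_self, Function.update_self, hoff j hjk] at this
        exact add_right_cancel this
      funext i
      by_cases hik : i = k
      · subst hik; exact hk'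
      · exact hoff i hik
    · intro h; rw [h]
  rw [if_congr hiff rfl rfl, Matrix.one_apply]

lemma clifford_unitary {C : Matrix (BV n) (BV n) ℂ} (hC : C ∈ CliffordGroup n) :
    Cᴴ * C = 1 := by
  induction hC using Submonoid.closure_induction with
  | mem M hM =>
    rcases hM with ⟨j, rfl⟩ | ⟨j, rfl⟩ | ⟨j, k, hjk, rfl⟩
    · exact H_unitary j
    · exact S_unitary j
    · exact CNOT_unitary j k hjk
  | one => simp
  | mul a b _ _ iha ihb =>
    rw [Matrix.conjTranspose_mul, Matrix.mul_assoc, ← Matrix.mul_assoc (aᴴ), iha,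
      Matrix.one_mul, ihb]


lemma innerC_eq_dot (u w : BV n → ℂ) : innerC u w = dotProduct (star u) w := by
  simp [innerC, dotProduct, Pi.star_apply, Complex.star_def]

lemma innerC_mulVec {C : Matrix (BV n) (BV n) ℂ} (hC : Cᴴ * C = 1) (v : BV n → ℂ) :
    innerC (C.mulVec v) (C.mulVec v) = innerC v v := by
  rw [innerC_eq_dot, innerC_eq_dot, Matrix.star_mulVec, dotProduct_mulVec,
    Matrix.vecMul_vecMul, hC, Matrix.vecMul_one]

lemma innerC_self (v : BV n → ℂ) :
    innerC v v = ((∑ b : BV n, ‖v b‖ ^ 2 : ℝ) : ℂ) := by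
  rw [innerC, Complex.ofReal_sum]
  refine Finset.sum_congr rfl fun b _ => ?_
  rw [mul_comm, Complex.mul_conj, Complex.sq_norm]

lemma stab_normsq {φ : BV n → ℂ} (hφ : φ ∈ stabStates n) :
    ∑ b : BV n, ‖φ b‖ ^ 2 = 1 := by
  obtain ⟨C, hC, rfl⟩ := hφ
  have h := innerC_mulVec (clifford_unitary hC) (e0 (n := n))
  rw [innerC_self, innerC_self] at h
  have he0 : ∑ b : BV n, ‖e0 b‖ ^ 2 = 1 := by
    simp [e0, apply_ite (fun z : ℂ => ‖z‖)]
  rw [he0] at h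
  exact_mod_cast h

lemma abs_innerC_le {φ ψ : BV n → ℂ} (hφ : ∑ b : BV n, ‖φ b‖ ^ 2 = 1)
    (hψ : ∑ b : BV n, ‖ψ b‖ ^ 2 = 1) :
    ‖innerC φ ψ‖ ≤ 1 := by
  let Φ : EuclideanSpace ℂ (BV n) := WithLp.toLp 2 φ
  let Ψ : EuclideanSpace ℂ (BV n) := WithLp.toLp 2 ψ
  have hinner : (inner ℂ Φ Ψ : ℂ) = innerC φ ψ := by
    simp [PiLp.inner_apply, RCLike.inner_apply, innerC, Φ, Ψ, mul_comm]
  have hnΦ : ‖Φ‖ = 1 := by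
    rw [EuclideanSpace.norm_eq]
    simp only [Φ, PiLp.toLp_apply]
    rw [show (∑ b : BV n, ‖φ b‖ ^ 2) = 1 from hφ, Real.sqrt_one]
  have hnΨ : ‖Ψ‖ = 1 := by
    rw [EuclideanSpace.norm_eq]
    simp only [Ψ, PiLp.toLp_apply]
    rw [show (∑ b : BV n, ‖ψ b‖ ^ 2) = 1 from hψ, Real.sqrt_one]
  calc ‖innerC φ ψ‖ = ‖(inner ℂ Φ Ψ : ℂ)‖ := by
        rw [hinner]
    _ ≤ ‖Φ‖ * ‖Ψ‖ := norm_inner_le_norm Φ Ψ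
    _ = 1 := by rw [hnΦ, hnΨ, mul_one]

/-- The computational basis state `|b⟩`. -/
def eb (b : BV n) : BV n → ℂ := fun a => if a = b then 1 else 0

lemma Xg_mem (j : Fin n) : Xg (n := n) j ∈ CliffordGroup n := by
  rw [← HSSH]
  have hH : Hgate (n := n) j ∈ CliffordGroup n :=
    Submonoid.subset_closure (Or.inl ⟨j, rfl⟩)
  have hS : Sgate (n := n) j ∈ CliffordGroup n :=
    Submonoid.subset_closure (Or.inr (Or.inl ⟨j, rfl⟩))
  exact mul_mem hH (mul_mem hS (mul_mem hS hH))

lemma Xg_mulVec (j : Fin n) (c : BV n) :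
    (Xg (n := n) j).mulVec (eb c) = eb (Function.update c j (c j + 1)) := by
  funext r
  rw [Matrix.mulVec, dotProduct, Finset.sum_eq_single c]
  · simp [Xg, eb]
  · intro k _ hk
    simp [eb, hk]
  · simp

lemma eb_mem (b : BV n) : eb b ∈ stabStates n := by
  have key : ∀ s : Finset (Fin n),
      eb (fun i => if i ∈ s then (1 : ZMod 2) else 0) ∈ stabStates n := by
    intro s
    induction s using Finset.induction with
    | empty =>
      refine ⟨1, one_mem _, ?_⟩
      rw [Matrix.one_mulVec]
      funext a
      simp [eb, e0, funext_iff]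
    | @insert a s ha ih =>
      obtain ⟨C, hC, hφ⟩ := ih
      refine ⟨Xg a * C, mul_mem (Xg_mem a) hC, ?_⟩
      rw [← Matrix.mulVec_mulVec, ← hφ, Xg_mulVec]
      refine congrArg eb ?_
      funext i
      by_cases hia : i = a
      · subst hia
        rw [Function.update_self]
        simp [ha]
      · rw [Function.update_of_ne hia]
        simp [Finset.mem_insert, hia]
  have hb : b = fun i => if i ∈ Finset.univ.filter (fun i => b i = 1) then (1 : ZMod 2) else 0 := by
    funext i
    rcases zmod2_cases (b i) with h | h <;> simp [h]
  rw [hb]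
  exact key _

lemma e0_mem : e0 (n := n) ∈ stabStates n :=
  ⟨1, one_mem _, (Matrix.one_mulVec _).symm⟩

end Aux

/-- For every n-qubit pure state ψ, ξ(ψ) · F_𝒮(ψ) ≥ 1. -/
theorem extent_mul_fidelity_ge_one {n : ℕ} (ψ : BV n → ℂ) (hψ : IsState ψ) :
    1 ≤ stabExtent ψ * stabFidelity ψ := by
  classical
  set F := stabFidelity ψ with hFdef
  set E : Set ℝ := {r | ∃ (m : ℕ) (c : Fin m → ℂ) (φ : Fin m → (BV n → ℂ)),
    (∀ i, φ i ∈ stabStates n) ∧ ψ = ∑ i, c i • φ i ∧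
    r = (∑ i, ‖c i‖) ^ 2} with hEdef
  have hext : stabExtent ψ = sInf E := rfl
  have hbdd : BddAbove {r | ∃ φ ∈ stabStates n, r = ‖innerC φ ψ‖ ^ 2} := by
    refine ⟨1, ?_⟩
    rintro r ⟨φ, hφ, rfl⟩
    have h := abs_innerC_le (stab_normsq hφ) hψ
    nlinarith [norm_nonneg (innerC φ ψ)]
  have hF_ge : ∀ φ ∈ stabStates n, ‖innerC φ ψ‖ ^ 2 ≤ F :=
    fun φ hφ => le_csSup hbdd ⟨φ, hφ, rfl⟩
  have hF0 : 0 ≤ F := le_trans (by positivity) (hF_ge e0 e0_mem)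
  have key : ∀ r ∈ E, 1 ≤ r * F := by
    rintro r ⟨m, c, φ, hφ, hdec, rfl⟩
    have habs : ∀ i, ‖innerC (φ i) ψ‖ ≤ Real.sqrt F := by
      intro i
      calc ‖innerC (φ i) ψ‖
          = Real.sqrt (‖innerC (φ i) ψ‖ ^ 2) :=
            (Real.sqrt_sq (norm_nonneg _)).symm
        _ ≤ Real.sqrt F := Real.sqrt_le_sqrt (hF_ge _ (hφ i))
    have h1 : innerC (∑ i, c i • φ i) ψ = ∑ i, (starRingEnd ℂ) (c i) * innerC (φ i) ψ := by
      simp only [innerC, Finset.sum_apply, Pi.smul_apply, smul_eq_mul, map_sum, map_mul,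
        Finset.sum_mul]
      rw [Finset.sum_comm]
      refine Finset.sum_congr rfl fun i _ => ?_
      rw [Finset.mul_sum]
      exact Finset.sum_congr rfl fun b _ => by ring
    have hψψ : innerC ψ ψ = 1 := by
      rw [innerC_self, hψ]
      norm_num
    have h2 : (1 : ℝ) ≤ (∑ i, ‖c i‖) * Real.sqrt F := by
      have hstart : (1 : ℝ) = ‖innerC ψ ψ‖ := by rw [hψψ]; simp
      rw [hstart]
      calc ‖innerC ψ ψ‖
          = ‖∑ i, (starRingEnd ℂ) (c i) * innerC (φ i) ψ‖ := by
            rw [← h1, ← hdec]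
        _ ≤ ∑ i, ‖(starRingEnd ℂ) (c i) * innerC (φ i) ψ‖ :=
            norm_sum_le _ _
        _ = ∑ i, ‖c i‖ * ‖innerC (φ i) ψ‖ := by
            simp [map_mul, Complex.norm_conj]
        _ ≤ ∑ i, ‖c i‖ * Real.sqrt F :=
            Finset.sum_le_sum fun i _ =>
              mul_le_mul_of_nonneg_left (habs i) (norm_nonneg _)
        _ = (∑ i, ‖c i‖) * Real.sqrt F := (Finset.sum_mul _ _ _).symm
    have h3 : (1 : ℝ) ≤ ((∑ i, ‖c i‖) * Real.sqrt F) ^ 2 := by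
      nlinarith [h2, sq_nonneg ((∑ i, ‖c i‖) * Real.sqrt F - 1)]
    calc (1 : ℝ) ≤ ((∑ i, ‖c i‖) * Real.sqrt F) ^ 2 := h3
      _ = (∑ i, ‖c i‖) ^ 2 * F := by rw [mul_pow, Real.sq_sqrt hF0]
  have hEne : E.Nonempty := by
    obtain ⟨e⟩ : Nonempty (Fin (Fintype.card (BV n)) ≃ BV n) :=
      ⟨(Fintype.equivFin (BV n)).symm⟩
    refine ⟨(∑ i : Fin (Fintype.card (BV n)), ‖ψ (e i)‖) ^ 2,
      Fintype.card (BV n), fun i => ψ (e i), fun i => eb (e i),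
      fun i => eb_mem _, ?_, rfl⟩
    have hsum : ∑ i : Fin (Fintype.card (BV n)), ψ (e i) • eb (e i)
        = ∑ b : BV n, ψ b • eb b :=
      Fintype.sum_equiv e _ _ fun i => rfl
    rw [hsum]
    funext a
    simp [eb, Finset.sum_apply]
  have hFpos : 0 < F := by
    obtain ⟨r0, hr0⟩ := hEne
    have h1 := key r0 hr0
    have hr0n : 0 ≤ r0 := by
      obtain ⟨m, c, φ, -, -, rfl⟩ := hr0
      positivity
    by_contra hneg
    push_neg at hneg
    nlinarith
  have hInf : 1 / F ≤ stabExtent ψ := by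
    rw [hext]
    refine le_csInf hEne fun r hr => ?_
    rw [div_le_iff₀ hFpos]
    exact key r hr
  calc (1 : ℝ) = (1 / F) * F := by field_simp
    _ ≤ stabExtent ψ * F := mul_le_mul_of_nonneg_right hInf hF0
end

section
/- Let C be a 2ⁿ×2ⁿ unitary that is a finite product of gates, each of which is either an element of the n-qubit Clifford group 𝒞ₙ or a T-gate T = diag(1, e^{iπ/4}) acting on some single qubit, and suppose exactly t of the factors are T-gates. Then the state ψ = C|0ⁿ⟩ satisfies ξ(ψ) ≤ (1 + 1/√2)^t. -/
open scoped BigOperators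
open Finset

noncomputable section AuxCT

/-- Coefficient of `I` in the decomposition `T = tA • I + tB • Z`. -/
def tA : ℂ := (1 + Complex.exp (Complex.I * Real.pi / 4)) / 2

/-- Coefficient of `Z` in the decomposition `T = tA • I + tB • Z`. -/
def tB : ℂ := (1 - Complex.exp (Complex.I * Real.pi / 4)) / 2

/-- `μ = |tA| + |tB|`. -/
def muCT : ℝ := ‖tA‖ + ‖tB‖

lemma expI_pi_div_four :
    Complex.exp (Complex.I * Real.pi / 4)
      = ((Real.sqrt 2 / 2 : ℝ) : ℂ) + ((Real.sqrt 2 / 2 : ℝ) : ℂ) * Complex.I := by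
  have h : Complex.I * (Real.pi : ℂ) / 4 = ((Real.pi / 4 : ℝ) : ℂ) * Complex.I := by
    push_cast; ring
  rw [h, Complex.exp_mul_I, ← Complex.ofReal_cos, ← Complex.ofReal_sin,
    Real.cos_pi_div_four, Real.sin_pi_div_four]

lemma sq_abs_tA : (‖tA‖) ^ 2 = (2 + Real.sqrt 2) / 4 := by
  have hs : Real.sqrt 2 ^ 2 = 2 := Real.sq_sqrt (by norm_num)
  rw [Complex.sq_norm, tA, expI_pi_div_four]
  simp [Complex.normSq_apply]
  nlinarith [hs]

lemma sq_abs_tB : (‖tB‖) ^ 2 = (2 - Real.sqrt 2) / 4 := by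
  have hs : Real.sqrt 2 ^ 2 = 2 := Real.sq_sqrt (by norm_num)
  rw [Complex.sq_norm, tB, expI_pi_div_four]
  simp [Complex.normSq_apply]
  nlinarith [hs]

lemma muCT_nonneg : 0 ≤ muCT :=
  add_nonneg (norm_nonneg _) (norm_nonneg _)

lemma muCT_sq : muCT ^ 2 = 1 + (Real.sqrt 2)⁻¹ := by
  have hs : Real.sqrt 2 ^ 2 = 2 := Real.sq_sqrt (by norm_num)
  have hspos : 0 < Real.sqrt 2 := Real.sqrt_pos.2 (by norm_num)
  have ha : 0 ≤ ‖tA‖ := norm_nonneg _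
  have hb : 0 ≤ ‖tB‖ := norm_nonneg _
  have hA := sq_abs_tA
  have hB := sq_abs_tB
  have hinv : (Real.sqrt 2)⁻¹ = Real.sqrt 2 / 2 := by
    field_simp
    exact hs.symm
  have hab : ‖tA‖ * ‖tB‖ = Real.sqrt 2 / 4 := by
    have h1 : (‖tA‖ * ‖tB‖) ^ 2 = (Real.sqrt 2 / 4) ^ 2 := by
      rw [mul_pow, hA, hB]; nlinarith [hs]
    have h2 : 0 ≤ ‖tA‖ * ‖tB‖ := mul_nonneg ha hb
    have h3 : 0 ≤ Real.sqrt 2 / 4 := by positivity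
    nlinarith [h1, h2, h3, sq_nonneg (‖tA‖ * ‖tB‖ - Real.sqrt 2 / 4),
      sq_nonneg (‖tA‖ * ‖tB‖ + Real.sqrt 2 / 4)]
  rw [muCT, hinv]
  nlinarith [hA, hB, hab]

lemma muCT_one_le : 1 ≤ muCT := by
  have h := muCT_sq
  have hspos : 0 < Real.sqrt 2 := Real.sqrt_pos.2 (by norm_num)
  nlinarith [muCT_nonneg, inv_pos.2 hspos]

lemma Sgate_sq_apply {n : ℕ} (j : Fin n) (r c : BV n) :
    (Sgate j * Sgate j) r c = if r = c then (-1 : ℂ) ^ (r j).val else 0 := by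
  rw [Matrix.mul_apply]
  simp only [Sgate, Matrix.of_apply, ite_mul, zero_mul]
  rw [Finset.sum_ite_eq]
  simp only [Finset.mem_univ, if_true]
  by_cases h : r = c
  · subst h
    have hI : Complex.I ^ (r j).val * Complex.I ^ (r j).val = (-1 : ℂ) ^ (r j).val := by
      rw [← pow_add, ← two_mul, pow_mul, Complex.I_sq]
    simp [hI]
  · simp [h]

lemma Tgate_decomp {n : ℕ} (j : Fin n) :
    Tgate j = tA • (1 : Matrix (BV n) (BV n) ℂ) + tB • (Sgate j * Sgate j) := by
  ext r c
  by_cases h : r = c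
  · subst h
    have hv : (r j).val = 0 ∨ (r j).val = 1 := by
      have := ZMod.val_lt (r j); omega
    have h1 : (tA • (1 : Matrix (BV n) (BV n) ℂ) + tB • (Sgate j * Sgate j)) r r
        = tA + tB * (-1 : ℂ) ^ (r j).val := by
      rw [Matrix.add_apply, Matrix.smul_apply, Matrix.smul_apply, Sgate_sq_apply,
        Matrix.one_apply_eq, if_pos rfl, smul_eq_mul, smul_eq_mul, mul_one]
    rw [h1]
    simp only [Tgate, Matrix.of_apply, if_pos rfl, if_true]
    rcases hv with hv | hv <;> rw [hv]
    · rw [pow_zero, pow_zero]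
      simp only [tA, tB]; ring
    · rw [pow_one, pow_one]
      simp only [tA, tB]; ring
  · simp only [Tgate, Matrix.of_apply, Matrix.add_apply, Matrix.smul_apply,
      Sgate_sq_apply, Matrix.one_apply_ne h, if_neg h, smul_eq_mul, mul_zero, add_zero]

lemma Sgate_sq_mem {n : ℕ} (j : Fin n) : Sgate j * Sgate j ∈ CliffordGroup n := by
  have h : Sgate j ∈ CliffordGroup n :=
    Submonoid.subset_closure (Or.inr (Or.inl ⟨j, rfl⟩))
  exact mul_mem h h

lemma e0_stab {n : ℕ} : (e0 : BV n → ℂ) ∈ stabStates n :=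
  ⟨1, one_mem _, (Matrix.one_mulVec e0).symm⟩

lemma stab_clifford {n : ℕ} {C : Matrix (BV n) (BV n) ℂ} (hC : C ∈ CliffordGroup n)
    {φ : BV n → ℂ} (hφ : φ ∈ stabStates n) : C.mulVec φ ∈ stabStates n := by
  obtain ⟨D, hD, rfl⟩ := hφ
  refine ⟨C * D, mul_mem hC hD, ?_⟩
  rw [Matrix.mulVec_mulVec]

/-- Core induction: a list of factors, each tagged Clifford (`false`) or T (`true`),
prepares a state admitting a stabilizer decomposition with `ℓ¹`-norm at most
`μ ^ (number of T factors)`. -/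
lemma key_decomp {n : ℕ} :
    ∀ L : List (Matrix (BV n) (BV n) ℂ × Bool),
    (∀ p ∈ L, (p.2 = true → ∃ j, p.1 = Tgate j) ∧ (p.2 = false → p.1 ∈ CliffordGroup n)) →
    ∃ (m : ℕ) (c : Fin m → ℂ) (φ : Fin m → (BV n → ℂ)),
      (∀ i, φ i ∈ stabStates n) ∧
      (L.map Prod.fst).prod.mulVec e0 = ∑ i, c i • φ i ∧
      (∑ i, ‖c i‖) ≤ muCT ^ (L.countP (fun p => p.2)) := by
  intro L
  induction L with
  | nil =>
    intro _
    refine ⟨1, fun _ => 1, fun _ => e0, fun _ => e0_stab, ?_, ?_⟩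
    · simp [Matrix.one_mulVec]
    · simp
  | cons p L ih =>
    intro h
    obtain ⟨m, c, φ, hstab, hdec, hb⟩ := ih (fun q hq => h q (List.mem_cons_of_mem _ hq))
    have hp := h p (List.mem_cons_self)
    have hprod : ((p :: L).map Prod.fst).prod.mulVec e0
        = p.1.mulVec ((L.map Prod.fst).prod.mulVec e0) := by
      simp [Matrix.mulVec_mulVec]
    have hsum : ∀ A : Matrix (BV n) (BV n) ℂ,
        A.mulVec (∑ i, c i • φ i) = ∑ i, c i • A.mulVec (φ i) := by
      intro A
      rw [← Matrix.mulVecLin_apply, map_sum]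
      simp [Matrix.mulVecLin_apply, Matrix.mulVec_smul]
    rcases Bool.eq_false_or_eq_true p.2 with hb2 | hb2
    · -- T factor
      obtain ⟨j, hj⟩ := hp.1 hb2
      refine ⟨m + m,
        Fin.addCases (fun i => tA * c i) (fun i => tB * c i),
        Fin.addCases (fun i => φ i) (fun i => (Sgate j * Sgate j).mulVec (φ i)),
        ?_, ?_, ?_⟩
      · intro i
        refine Fin.addCases (motive := fun i =>
          Fin.addCases (motive := fun _ => BV n → ℂ)
            (fun i => φ i) (fun i => (Sgate j * Sgate j).mulVec (φ i)) i ∈ stabStates n)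
          (fun i => ?_) (fun i => ?_) i
        · simp only [Fin.addCases_left]; exact hstab i
        · simp only [Fin.addCases_right]; exact stab_clifford (Sgate_sq_mem j) (hstab i)
      · rw [hprod, hj, Tgate_decomp, Matrix.add_mulVec, Matrix.smul_mulVec,
          Matrix.smul_mulVec, Matrix.one_mulVec, hdec, hsum,
          Fin.sum_univ_add]
        simp only [Fin.addCases_left, Fin.addCases_right, Finset.smul_sum, smul_smul]
      · rw [Fin.sum_univ_add]
        simp only [Fin.addCases_left, Fin.addCases_right, norm_mul]
        rw [← Finset.mul_sum, ← Finset.mul_sum, ← add_mul]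
        have hcount : (p :: L).countP (fun p => p.2)
            = L.countP (fun p => p.2) + 1 := by
          rw [List.countP_cons, hb2]; simp
        rw [hcount, pow_succ]
        have hsum_nonneg : 0 ≤ ∑ i, ‖c i‖ :=
          Finset.sum_nonneg fun i _ => norm_nonneg _
        calc (‖tA‖ + ‖tB‖) * ∑ i, ‖c i‖
            ≤ muCT * muCT ^ (L.countP (fun p => p.2)) := by
              exact mul_le_mul le_rfl hb hsum_nonneg muCT_nonneg
          _ = muCT ^ (L.countP (fun p => p.2)) * muCT := mul_comm _ _
    · -- Clifford factor
      obtain hCl := hp.2 hb2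
      refine ⟨m, c, fun i => p.1.mulVec (φ i),
        fun i => stab_clifford hCl (hstab i), ?_, ?_⟩
      · rw [hprod, hdec, hsum]
      · have : (p :: L).countP (fun p => p.2) = L.countP (fun p => p.2) := by
          rw [List.countP_cons, hb2]; simp
        rw [this]; exact hb
lemma countP_ofFn {α : Type*} (q : α → Bool) :
    ∀ (m : ℕ) (f : Fin m → α),
      (List.ofFn f).countP q = (Finset.univ.filter fun i => q (f i) = true).card := by
  intro m
  induction m with
  | zero => intro f; simp
  | succ m ih =>
    intro f
    rw [List.ofFn_succ, List.countP_cons, ih fun i => f i.succ,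
      Finset.card_filter, Finset.card_filter, Fin.sum_univ_succ]
    by_cases h : q (f 0) = true <;> simp [h, add_comm]

end AuxCT

/-- a Clifford+T circuit with exactly `t` T-gate factors prepares a state
of stabilizer extent at most `(1 + 1/√2)^t`. The circuit is a finite (ordered) product
of factors `g 0 * g 1 * ⋯ * g (m-1)`, each factor being either a Clifford unitary or a
T-gate on some qubit; `S` is the set of positions holding T-gates, with `S.card = t`. -/
theorem clifford_T_extent_bound {n : ℕ} (t m : ℕ)
    (g : Fin m → Matrix (BV n) (BV n) ℂ) (S : Finset (Fin m)) (hcard : S.card = t)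
    (hT : ∀ i ∈ S, ∃ j, g i = Tgate j)
    (hCliff : ∀ i ∉ S, g i ∈ CliffordGroup n)
    (C : Matrix (BV n) (BV n) ℂ) (hC : C = (List.ofFn g).prod) :
    stabExtent (C.mulVec e0) ≤ (1 + (Real.sqrt 2)⁻¹) ^ t := by
  classical
  set L : List (Matrix (BV n) (BV n) ℂ × Bool) :=
    List.ofFn (fun i => (g i, decide (i ∈ S))) with hL
  have hmap : L.map Prod.fst = List.ofFn g := by
    rw [hL, List.map_ofFn]; rfl
  have hcount : L.countP (fun p => p.2) = t := by
    rw [hL, countP_ofFn, ← hcard]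
    congr 1
    ext i
    simp
  have hcond : ∀ p ∈ L,
      (p.2 = true → ∃ j, p.1 = Tgate j) ∧ (p.2 = false → p.1 ∈ CliffordGroup n) := by
    intro p hp
    rw [hL, List.mem_ofFn] at hp
    obtain ⟨i, rfl⟩ := hp
    refine ⟨fun h => hT i ?_, fun h => hCliff i ?_⟩
    · simpa using h
    · simpa using h
  obtain ⟨m', c, φ, hstab, hdec, hb⟩ := key_decomp L hcond
  have hmem : ((∑ i, ‖c i‖) ^ 2) ∈
      {r | ∃ (m : ℕ) (c : Fin m → ℂ) (φ : Fin m → (BV n → ℂ)),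
        (∀ i, φ i ∈ stabStates n) ∧ C.mulVec e0 = ∑ i, c i • φ i ∧
        r = (∑ i, ‖c i‖) ^ 2} := by
    exact ⟨m', c, φ, hstab, by rw [hC, ← hmap]; exact hdec, rfl⟩
  have hbdd : BddBelow {r | ∃ (m : ℕ) (c : Fin m → ℂ) (φ : Fin m → (BV n → ℂ)),
      (∀ i, φ i ∈ stabStates n) ∧ C.mulVec e0 = ∑ i, c i • φ i ∧
      r = (∑ i, ‖c i‖) ^ 2} := by
    refine ⟨0, ?_⟩
    rintro r ⟨m'', c'', φ'', -, -, rfl⟩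
    positivity
  have hle : stabExtent (C.mulVec e0) ≤ (∑ i, ‖c i‖) ^ 2 :=
    csInf_le hbdd hmem
  have hsum_nonneg : 0 ≤ ∑ i, ‖c i‖ :=
    Finset.sum_nonneg fun i _ => norm_nonneg _
  have h1 : (∑ i, ‖c i‖) ^ 2 ≤ (muCT ^ t) ^ 2 := by
    rw [hcount] at hb
    exact pow_le_pow_left₀ hsum_nonneg hb 2
  have h2 : (muCT ^ t) ^ 2 = (1 + (Real.sqrt 2)⁻¹) ^ t := by
    rw [← pow_mul, mul_comm, pow_mul, muCT_sq]
  linarith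
end

section
/- Let ψ = Σ_{x∈𝔽₂ⁿ} c_x |x⟩ be an n-qubit pure state written in the computational basis. Then 32ⁿ Σ_{x∈𝔽₂^{2n}} p̂_ψ(x)³ ≥ |c_{0ⁿ}|^{12}, where c_{0ⁿ} is the amplitude on the all-zeros basis state. -/
open scoped BigOperators
open Finset

noncomputable section AuxSF
namespace SF
variable {n : ℕ}

lemma z2cases : ∀ x : ZMod 2, x = 0 ∨ x = 1 := by decide

def chi (q a : BV n) : ℂ := ∏ i, (-1 : ℂ) ^ ((q i * a i : ZMod 2)).val

lemma neg_one_val_add (x y : ZMod 2) :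
    ((-1:ℂ)) ^ ((x + y).val) = (-1)^x.val * (-1)^y.val := by
  rcases z2cases x with hx|hx <;> rcases z2cases y with hy|hy <;> subst hx <;> subst hy <;>
    norm_num [show ((2:ZMod 2)).val = 0 from rfl, show ((1:ZMod 2)).val = 1 from rfl,
      show ((0:ZMod 2)).val = 0 from rfl]

lemma neg_one_pow_bdot (q a : BV n) : ((-1 : ℂ)) ^ bdot q a = chi q a := by
  rw [bdot, Finset.card_filter, ← Finset.prod_pow_eq_pow_sum]
  refine Finset.prod_congr rfl fun i _ => ?_
  congr 1
  rcases z2cases (q i) with h1|h1 <;> rcases z2cases (a i) with h2|h2 <;>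
    simp [h1, h2, show ((1:ZMod 2)).val = 1 from rfl]

lemma chi_add (q a b : BV n) : chi q (a + b) = chi q a * chi q b := by
  rw [chi, chi, chi, ← Finset.prod_mul_distrib]
  refine Finset.prod_congr rfl fun i _ => ?_
  have : q i * (a + b) i = q i * a i + q i * b i := by
    simp [Pi.add_apply, mul_add]
  rw [this, neg_one_val_add]

lemma chi_comm (q a : BV n) : chi q a = chi a q := by
  unfold chi
  exact Finset.prod_congr rfl fun i _ => by rw [mul_comm]

lemma chi_zero (q : BV n) : chi q 0 = 1 := by
  unfold chi; simp

lemma conj_chi (q a : BV n) : (starRingEnd ℂ) (chi q a) = chi q a := by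
  unfold chi
  rw [map_prod]
  exact Finset.prod_congr rfl fun i _ => by rw [map_pow, map_neg, map_one]

lemma card_BV : Fintype.card (BV n) = 2 ^ n := by
  simp [Fintype.card_fun]

lemma sum_chi (b : BV n) : ∑ q : BV n, chi q b = if b = 0 then (2^n : ℂ) else 0 := by
  split_ifs with hb
  · subst hb
    simp only [chi_zero, Finset.sum_const, Finset.card_univ, card_BV, nsmul_eq_mul, mul_one]
    push_cast; ring
  · obtain ⟨i, hi⟩ : ∃ i, b i ≠ 0 := by
      by_contra h; push_neg at h; exact hb (funext h)
    have hbi : b i = 1 := (z2cases (b i)).resolve_left hi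
    refine Finset.sum_ninvolution (fun q => Function.update q i (q i + 1)) ?_ ?_ ?_ ?_
    · intro q
      have h1 : chi (Function.update q i (q i + 1)) b = - chi q b := by
        unfold chi
        rw [← Finset.mul_prod_erase _ _ (Finset.mem_univ i),
            ← Finset.mul_prod_erase _ _ (Finset.mem_univ i)]
        have h2 : ∀ j ∈ Finset.univ.erase i,
            (-1:ℂ) ^ ((Function.update q i (q i + 1) j * b j).val)
              = (-1:ℂ) ^ ((q j * b j).val) := by
          intro j hj
          rw [Function.update_of_ne (Finset.mem_erase.1 hj).1]
        rw [Finset.prod_congr rfl h2, Function.update_self, hbi, mul_one, mul_one,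
          neg_one_val_add, show ((1:ZMod 2)).val = 1 from rfl]
        ring
      rw [h1]; ring
    · intro q _
      intro h
      have := congrFun h i
      simp only [Function.update_self] at this
      exact absurd this (by rcases z2cases (q i) with h|h <;> simp [h])
    · intro q; exact Finset.mem_univ _
    · intro q
      funext j
      by_cases hj : j = i
      · subst hj
        simp only [Function.update_self]
        rcases z2cases (q j) with h|h <;> rw [h] <;> decide
      · simp only [Function.update_of_ne hj]

lemma addself (v : BV n) : v + v = 0 := by
  funext i
  have : ∀ x : ZMod 2, x + x = 0 := by decide
  exact this (v i)

lemma eq_add_iff {a b c : BV n} : a = b + c ↔ b = a + c := by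
  constructor <;> intro h <;> subst h <;> rw [add_assoc, addself, add_zero]

lemma weylExp_eq (ψ : BV n → ℂ) (x : BV n × BV n) :
    weylExp ψ x = Complex.I ^ bdot x.1 x.2 *
      ∑ r, (starRingEnd ℂ) (ψ r) * chi x.2 (r + x.1) * ψ (r + x.1) := by
  rw [weylExp, Finset.mul_sum]
  refine Finset.sum_congr rfl fun r _ => ?_
  rw [Matrix.mulVec, dotProduct]
  simp only [Weyl, Matrix.of_apply]
  have h1 : ∀ c : BV n, (r = c + x.1) ↔ (c = r + x.1) := fun c => eq_add_iff
  simp only [h1, ite_mul, zero_mul, Finset.sum_ite_eq', Finset.mem_univ, if_true]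
  rw [neg_one_pow_bdot]
  ring

lemma I_conj_I (k : ℕ) : Complex.I ^ k * (starRingEnd ℂ) (Complex.I ^ k) = 1 := by
  rw [map_pow, Complex.conj_I, ← mul_pow, mul_neg, Complex.I_mul_I, neg_neg, one_pow]

lemma A_eq (ψ : BV n → ℂ) (x : BV n × BV n) :
    weylExp ψ x * (starRingEnd ℂ) (weylExp ψ x)
      = ∑ r : BV n, ∑ r' : BV n,
          (starRingEnd ℂ) (ψ r) * ψ (r + x.1) * ψ r' * (starRingEnd ℂ) (ψ (r' + x.1))
            * (chi x.2 (r + x.1) * chi x.2 (r' + x.1)) := by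
  rw [weylExp_eq, map_mul, map_sum, mul_mul_mul_comm, I_conj_I, one_mul,
      Finset.sum_mul_sum]
  refine Finset.sum_congr rfl fun r _ => Finset.sum_congr rfl fun r' _ => ?_
  simp only [map_mul, conj_chi, Complex.conj_conj]
  ring

lemma add_eq_zero_iff' {u v : BV n} : u + v = 0 ↔ v = u := by
  constructor
  · intro h
    have := congrArg (fun w => u + w) h
    simpa [← add_assoc, addself] using this
  · intro h; rw [h]; exact addself u

lemma sum_collapse (f : BV n → ℂ) (u : BV n) :
    ∑ r' : BV n, (∑ q : BV n, chi q (u + r')) * f r' = (2^n : ℂ) * f u := by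
  have h : ∀ r' : BV n, (∑ q : BV n, chi q (u + r')) = if r' = u then (2^n:ℂ) else 0 := by
    intro r'
    rw [sum_chi]
    simp only [add_eq_zero_iff']
  simp only [h, ite_mul, zero_mul, Finset.sum_ite_eq', Finset.mem_univ, if_true]

lemma duality (ψ : BV n → ℂ) (s : BV n × BV n) :
    ∑ x : BV n × BV n, chi x.1 s.1 * chi x.2 s.2 *
        (weylExp ψ x * (starRingEnd ℂ) (weylExp ψ x))
      = 2^n * (weylExp ψ (s.2, s.1) * (starRingEnd ℂ) (weylExp ψ (s.2, s.1))) := by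
  have step1 : ∀ p : BV n, ∑ q : BV n,
      chi p s.1 * chi q s.2 * (weylExp ψ (p,q) * (starRingEnd ℂ) (weylExp ψ (p,q)))
      = (2^n : ℂ) * ∑ r : BV n, chi p s.1 *
          ((starRingEnd ℂ) (ψ r) * ψ (r + p) * ψ (r + s.2)
            * (starRingEnd ℂ) (ψ (r + s.2 + p))) := by
    intro p
    have h1 : ∀ q : BV n,
        chi p s.1 * chi q s.2 * (weylExp ψ (p,q) * (starRingEnd ℂ) (weylExp ψ (p,q)))
        = ∑ r : BV n, ∑ r' : BV n, chi q ((r + s.2) + r') *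
            (chi p s.1 * ((starRingEnd ℂ) (ψ r) * ψ (r + p) * ψ r'
              * (starRingEnd ℂ) (ψ (r' + p)))) := by
      intro q
      rw [A_eq, Finset.mul_sum]
      refine Finset.sum_congr rfl fun r _ => ?_
      rw [Finset.mul_sum]
      refine Finset.sum_congr rfl fun r' _ => ?_
      have hx : chi q s.2 * (chi q (r + p) * chi q (r' + p)) = chi q ((r + s.2) + r') := by
        rw [← chi_add, ← chi_add]
        congr 1
        funext i
        have h2 : ∀ a b c d : ZMod 2, a + (b + d + (c + d)) = b + a + c := by decide
        exact h2 (s.2 i) (r i) (r' i) (p i)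
      linear_combination (chi p s.1 * ((starRingEnd ℂ) (ψ r) * ψ (r + p) * ψ r'
        * (starRingEnd ℂ) (ψ (r' + p)))) * hx
    simp only [h1]
    rw [Finset.sum_comm]
    rw [Finset.mul_sum]
    refine Finset.sum_congr rfl fun r _ => ?_
    rw [Finset.sum_comm]
    have := sum_collapse (fun r' => chi p s.1 * ((starRingEnd ℂ) (ψ r) * ψ (r + p) * ψ r'
      * (starRingEnd ℂ) (ψ (r' + p)))) (r + s.2)
    simp only [Finset.sum_mul] at this
    rw [this]
  rw [Fintype.sum_prod_type]
  simp only [step1]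
  rw [← Finset.mul_sum]
  congr 1
  rw [A_eq]
  rw [Finset.sum_comm]
  refine Finset.sum_congr rfl fun r _ => ?_
  have hre : ∀ g : BV n → ℂ, ∑ r' : BV n, g r' = ∑ p : BV n, g (r + p) :=
    fun g => (Equiv.sum_comp (Equiv.addLeft r) g).symm
  conv_rhs => rw [hre]
  refine Finset.sum_congr rfl fun p _ => ?_
  have harg : r + p + s.2 = r + s.2 + p := add_right_comm r p s.2
  have hx : chi s.1 (r + s.2) * chi s.1 (r + s.2 + p) = chi p s.1 := by
    rw [← chi_add, chi_comm]
    congr 1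
    funext i
    have h2 : ∀ a b c : ZMod 2, (a + c) + (a + c + b) = b := by decide
    exact h2 (r i) (p i) (s.2 i)
  simp only [harg]
  rw [← hx]
  ring


lemma cast_abs_sq (z : ℂ) : ((‖z‖ : ℂ))^2 = z * (starRingEnd ℂ) z := by
  rw [Complex.mul_conj, Complex.normSq_eq_norm_sq]
  push_cast
  ring

lemma duality_real (ψ : BV n → ℂ) (s : BV n × BV n) :
    ∑ x : BV n × BV n, (-1:ℝ) ^ (bdot x.1 s.1 + bdot x.2 s.2) * ‖weylExp ψ x‖ ^ 2
      = 2^n * ‖weylExp ψ (s.2, s.1)‖ ^ 2 := by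
  apply Complex.ofReal_injective
  push_cast
  simp only [cast_abs_sq, pow_add, neg_one_pow_bdot]
  exact duality ψ s

lemma fourier_eq (ψ : BV n → ℂ) (s : BV n × BV n) :
    booleanFourier (charDist ψ) s = ((2:ℝ)^n)⁻¹ * charDist ψ (s.2, s.1) := by
  rw [booleanFourier]
  have h : ∑ x : BV n × BV n, charDist ψ x * (-1:ℝ)^(bdot x.1 s.1 + bdot x.2 s.2)
      = ((2:ℝ)^n)⁻¹ * (2^n * ‖weylExp ψ (s.2,s.1)‖^2) := by
    rw [← duality_real ψ s, Finset.mul_sum]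
    exact Finset.sum_congr rfl fun x _ => by rw [charDist]; ring
  rw [h, charDist]
  have h2 : (4:ℝ)^n = 2^n * 2^n := by
    rw [show (4:ℝ) = 2*2 by norm_num, mul_pow]
  rw [h2]
  have hpos : (0:ℝ) < (2:ℝ)^n := by positivity
  field_simp

lemma diag_sum_complex (ψ : BV n → ℂ) :
    ∑ q : BV n, (weylExp ψ (0, q) * (starRingEnd ℂ) (weylExp ψ (0, q)))
      = 2^n * ∑ r : BV n, (ψ r * (starRingEnd ℂ) (ψ r))^2 := by
  have h1 : ∀ q : BV n, weylExp ψ (0,q) * (starRingEnd ℂ) (weylExp ψ (0,q))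
      = ∑ r : BV n, ∑ r' : BV n, chi q (r + r') *
          ((starRingEnd ℂ) (ψ r) * ψ r * ψ r' * (starRingEnd ℂ) (ψ r')) := by
    intro q
    rw [A_eq]
    refine Finset.sum_congr rfl fun r _ => Finset.sum_congr rfl fun r' _ => ?_
    simp only [add_zero]
    rw [← chi_add]
    ring
  simp only [h1]
  rw [Finset.sum_comm, Finset.mul_sum]
  refine Finset.sum_congr rfl fun r _ => ?_
  rw [Finset.sum_comm]
  have h2 := sum_collapse (fun r' => (starRingEnd ℂ) (ψ r) * ψ r * ψ r'
    * (starRingEnd ℂ) (ψ r')) r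
  simp only [Finset.sum_mul] at h2
  rw [h2]
  ring

lemma diag_sum (ψ : BV n → ℂ) :
    ∑ q : BV n, charDist ψ (0, q) = ∑ b : BV n, ‖ψ b‖ ^ 4 := by
  have hC : ∑ q : BV n, ‖weylExp ψ (0,q)‖^2
      = 2^n * ∑ b : BV n, ‖ψ b‖ ^ 4 := by
    apply Complex.ofReal_injective
    push_cast
    simp only [cast_abs_sq]
    rw [diag_sum_complex]

    congr 1
    refine Finset.sum_congr rfl fun b _ => ?_
    rw [← cast_abs_sq]
    push_cast
    ring
  simp only [charDist]
  rw [← Finset.mul_sum, hC]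
  have hpos : (0:ℝ) < (2:ℝ)^n := by positivity
  field_simp

end SF
end AuxSF


/-- 32ⁿ Σ_x p̂_ψ(x)³ ≥ |c_{0ⁿ}|^{12}, where c_{0ⁿ} = ψ(0ⁿ) is the amplitude
of ψ on the all-zeros computational basis state. -/

theorem sum_fourier_cubed_ge_amplitude {n : ℕ} (hn : 1 ≤ n) (ψ : BV n → ℂ)
    (hψ : IsState ψ) :
    ‖ψ 0‖ ^ 12 ≤
      (32 ^ n : ℝ) * ∑ x : BV n × BV n, booleanFourier (charDist ψ) x ^ 3 := by
  classical
  have hcard : (Finset.univ : Finset (BV n)).card = 2^n := by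
    rw [Finset.card_univ, SF.card_BV]
  have hnn : ∀ x : BV n × BV n, 0 ≤ charDist ψ x := fun x => by
    rw [charDist]; positivity
  have h1 : ∑ x : BV n × BV n, booleanFourier (charDist ψ) x ^ 3
      = (((2:ℝ)^n)⁻¹)^3 * ∑ x : BV n × BV n, charDist ψ x ^ 3 := by
    calc ∑ x : BV n × BV n, booleanFourier (charDist ψ) x ^ 3
        = ∑ x : BV n × BV n, (((2:ℝ)^n)⁻¹)^3 * charDist ψ (x.2, x.1) ^ 3 :=
          Finset.sum_congr rfl fun x _ => by rw [SF.fourier_eq]; ring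
      _ = (((2:ℝ)^n)⁻¹)^3 * ∑ x : BV n × BV n, charDist ψ (x.2, x.1) ^ 3 := by
          rw [Finset.mul_sum]
      _ = (((2:ℝ)^n)⁻¹)^3 * ∑ x : BV n × BV n, charDist ψ x ^ 3 := by
          refine congrArg _ (Fintype.sum_equiv (Equiv.prodComm (BV n) (BV n)) _ _ fun x => ?_)
          simp [Prod.swap]
  have h2 : ∑ q : BV n, charDist ψ (0, q) ^ 3 ≤ ∑ x : BV n × BV n, charDist ψ x ^ 3 := by
    rw [Fintype.sum_prod_type]
    exact Finset.single_le_sum (f := fun p => ∑ q : BV n, charDist ψ (p,q)^3)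
      (fun p _ => Finset.sum_nonneg fun q _ => pow_nonneg (hnn _) 3) (Finset.mem_univ 0)
  have h3 : (∑ q : BV n, charDist ψ (0,q))^3 / ((2:ℝ)^n)^2
      ≤ ∑ q : BV n, charDist ψ (0,q)^3 := by
    have h := pow_sum_div_card_le_sum_pow (s := Finset.univ)
      (f := fun q : BV n => charDist ψ (0,q)) (fun i _ => hnn _) 2
    simpa [hcard] using h
  have h4 : ‖ψ 0‖^4 ≤ ∑ q : BV n, charDist ψ (0,q) := by
    rw [SF.diag_sum]
    exact Finset.single_le_sum (f := fun b => ‖ψ b‖^4)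
      (fun b _ => by positivity) (Finset.mem_univ 0)
  have hpos : (0:ℝ) < (2:ℝ)^n := by positivity
  calc ‖ψ 0‖ ^ 12
      = (32:ℝ)^n * ((((2:ℝ)^n)⁻¹)^3 * ((‖ψ 0‖^4)^3 / ((2:ℝ)^n)^2)) := by
        rw [show (32:ℝ) = 2^5 by norm_num, ← pow_mul, ← pow_mul, ← pow_mul]
        field_simp
        ring
    _ ≤ (32:ℝ)^n * ((((2:ℝ)^n)⁻¹)^3 * ((∑ q : BV n, charDist ψ (0,q))^3 / ((2:ℝ)^n)^2)) := by
        gcongr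
    _ ≤ (32:ℝ)^n * ((((2:ℝ)^n)⁻¹)^3 * (∑ q : BV n, charDist ψ (0,q)^3)) := by
        gcongr
    _ ≤ (32:ℝ)^n * ((((2:ℝ)^n)⁻¹)^3 * (∑ x : BV n × BV n, charDist ψ x^3)) := by
        gcongr
    _ = (32 ^ n : ℝ) * ∑ x : BV n × BV n, booleanFourier (charDist ψ) x ^ 3 := by
        rw [h1]
end

section
/- Let m ≥ 1 and let ψ = |T⟩^{⊗m}, an m-qubit state. Then Σ_{x∈𝔽₂^{2m}} p̂_ψ(x)³ = (5/256)^m, and consequently η(ψ) := 2^m Σ_{x∈𝔽₂^{2m}} q_ψ(x) p_ψ(x) = (5/8)^m. -/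
open scoped BigOperators
open Finset

noncomputable section
namespace TproofAux
open Finset

lemma sum_pi_prod {K : Type*} [Fintype K] [DecidableEq K] {R : Type*} [CommSemiring R]
    {m : ℕ} (F : Fin m → K → R) :
    ∑ f : Fin m → K, ∏ i, F i (f i) = ∏ i, ∑ a, F i a := by
  rw [Finset.prod_univ_sum]; simp

lemma sum_pair_prod {m : ℕ} {R : Type*} [CommSemiring R] (F : Fin m → ZMod 2 × ZMod 2 → R) :
    ∑ x : BV m × BV m, ∏ i, F i (x.1 i, x.2 i) = ∏ i, ∑ ab : ZMod 2 × ZMod 2, F i ab := by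
  rw [← sum_pi_prod F]
  refine (Fintype.sum_equiv (Equiv.arrowProdEquivProdArrow (Fin m) (fun _ => ZMod 2) (fun _ => ZMod 2))
    (fun f => ∏ i, F i (f i)) (fun x => ∏ i, F i (x.1 i, x.2 i)) fun f => ?_).symm
  simp [Equiv.arrowProdEquivProdArrow]

lemma bdot_eq_sum {m : ℕ} (p q : BV m) : bdot p q = ∑ i, (p i).val * (q i).val := by
  rw [bdot, Finset.card_filter]
  refine Finset.sum_congr rfl fun i _ => ?_
  generalize p i = a; generalize q i = b
  revert a b; decide

/-- single-qubit T-state amplitudes -/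
def t (a : ZMod 2) : ℂ :=
  (((Real.sqrt 2 : ℝ) : ℂ))⁻¹ * Complex.exp (Complex.I * Real.pi / 4) ^ a.val

/-- single-qubit Weyl expectation -/
def W1 (p q : ZMod 2) : ℂ :=
  ∑ a : ZMod 2, (starRingEnd ℂ) (t a) *
    (Complex.I ^ (p.val * q.val) * (-1 : ℂ) ^ (q.val * (a + p).val) * t (a + p))

lemma add_add_cancel {m : ℕ} (v w : BV m) : v + w + w = v := by
  funext i
  show v i + w i + w i = v i
  generalize v i = a; generalize w i = b; revert a b; decide

lemma weylExp_Tstate {m : ℕ} (x : BV m × BV m) :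
    weylExp (TstateM m) x = ∏ i, W1 (x.1 i) (x.2 i) := by
  have hmv : ∀ r, (Weyl x).mulVec (TstateM m) r =
      Complex.I ^ bdot x.1 x.2 * (-1 : ℂ) ^ bdot x.2 (r + x.1) * TstateM m (r + x.1) := by
    intro r
    rw [Matrix.mulVec, dotProduct, Finset.sum_eq_single (r + x.1)]
    · simp [Weyl, add_add_cancel]
    · intro c _ hc
      have : r ≠ c + x.1 := by
        intro h; exact hc (by rw [h, add_add_cancel])
      simp [Weyl, this]
    · simp
  have ht : ∀ b : BV m, TstateM m b = ∏ i, t (b i) := fun b => rfl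
  rw [weylExp]
  rw [show ∑ r : BV m, (starRingEnd ℂ) (TstateM m r) * (Weyl x).mulVec (TstateM m) r
      = ∑ r : BV m, ∏ i, ((starRingEnd ℂ) (t (r i)) *
          (Complex.I ^ ((x.1 i).val * (x.2 i).val) *
           (-1 : ℂ) ^ ((x.2 i).val * (r i + x.1 i).val) * t (r i + x.1 i))) from ?_,
    sum_pi_prod (fun i a => (starRingEnd ℂ) (t a) *
          (Complex.I ^ ((x.1 i).val * (x.2 i).val) *
           (-1 : ℂ) ^ ((x.2 i).val * (a + x.1 i).val) * t (a + x.1 i)))]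
  · rfl
  refine Finset.sum_congr rfl fun r _ => ?_
  rw [hmv r, ht, ht, map_prod]
  rw [bdot_eq_sum x.1 x.2, bdot_eq_sum x.2 (r + x.1),
    ← Finset.prod_pow_eq_pow_sum, ← Finset.prod_pow_eq_pow_sum,
    ← Finset.prod_mul_distrib, ← Finset.prod_mul_distrib, ← Finset.prod_mul_distrib]
  exact Finset.prod_congr rfl fun i _ => rfl

lemma hE : Complex.exp (Complex.I * Real.pi / 4)
    = ((Real.sqrt 2 : ℝ) : ℂ) / 2 + ((Real.sqrt 2 : ℝ) : ℂ) / 2 * Complex.I := by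
  rw [show Complex.I * (Real.pi : ℂ) / 4 = ((Real.pi / 4 : ℝ) : ℂ) * Complex.I by push_cast; ring,
    Complex.exp_mul_I, ← Complex.ofReal_cos, ← Complex.ofReal_sin,
    Real.cos_pi_div_four, Real.sin_pi_div_four]
  push_cast; ring

lemma sum_zmod2 {R : Type*} [AddCommMonoid R] (f : ZMod 2 → R) :
    ∑ a : ZMod 2, f a = f 0 + f 1 := by
  rw [show (Finset.univ : Finset (ZMod 2)) = {0, 1} by decide]
  simp

lemma hs : ((Real.sqrt 2 : ℝ) : ℂ) ^ 2 = 2 := by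
  rw [← Complex.ofReal_pow, Real.sq_sqrt (by norm_num : (2:ℝ) ≥ 0)]; norm_num
lemma hs0 : ((Real.sqrt 2 : ℝ) : ℂ) ≠ 0 := by
  simpa using (Real.sqrt_ne_zero' (x := 2)).mpr (by norm_num)

lemma t0 : t 0 = (((Real.sqrt 2 : ℝ) : ℂ))⁻¹ := by
  simp [t, show ((0:ZMod 2)).val = 0 from rfl]
lemma t1 : t 1 = (((Real.sqrt 2 : ℝ) : ℂ))⁻¹ *
    (((Real.sqrt 2 : ℝ) : ℂ) / 2 + ((Real.sqrt 2 : ℝ) : ℂ) / 2 * Complex.I) := by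
  simp [t, show ((1:ZMod 2)).val = 1 from rfl, hE]
lemma c0 : (starRingEnd ℂ) (t 0) = (((Real.sqrt 2 : ℝ) : ℂ))⁻¹ := by
  rw [t0, map_inv₀, Complex.conj_ofReal]
lemma c1 : (starRingEnd ℂ) (t 1) = (((Real.sqrt 2 : ℝ) : ℂ))⁻¹ *
    (((Real.sqrt 2 : ℝ) : ℂ) / 2 - ((Real.sqrt 2 : ℝ) : ℂ) / 2 * Complex.I) := by
  rw [t1]
  simp only [map_mul, map_inv₀, map_add, map_div₀, Complex.conj_ofReal, Complex.conj_I, map_ofNat]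
  ring

lemma W1_00 : W1 0 0 = 1 := by
  rw [W1, sum_zmod2]
  simp only [show ((0:ZMod 2)+(0:ZMod 2)) = 0 from rfl, show ((1:ZMod 2)+(0:ZMod 2)) = 1 from rfl,
    show ((0:ZMod 2)).val = 0 from rfl, show ((1:ZMod 2)).val = 1 from rfl,
    mul_zero, zero_mul, pow_zero, pow_one, one_mul, mul_one, c0, c1]
  simp only [t0, t1]
  have h2 := hs; have h0 := hs0; have hI := Complex.I_sq
  field_simp
  linear_combination (-2 : ℂ) * h2 + (-((Real.sqrt 2 : ℝ) : ℂ)^2) * hI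

lemma W1_01 : W1 0 1 = 0 := by
  rw [W1, sum_zmod2]
  simp only [show ((0:ZMod 2)+(0:ZMod 2)) = 0 from rfl, show ((1:ZMod 2)+(0:ZMod 2)) = 1 from rfl,
    show ((0:ZMod 2)).val = 0 from rfl, show ((1:ZMod 2)).val = 1 from rfl,
    mul_zero, zero_mul, pow_zero, pow_one, one_mul, mul_one, c0, c1]
  simp only [t0, t1]
  have h2 := hs; have h0 := hs0; have hI := Complex.I_sq
  field_simp
  linear_combination (-2 : ℂ) * h2 + (((Real.sqrt 2 : ℝ) : ℂ)^2) * hI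

lemma W1_10 : W1 1 0 = (((Real.sqrt 2 : ℝ) : ℂ))⁻¹ := by
  rw [W1, sum_zmod2]
  simp only [show ((0:ZMod 2)+(1:ZMod 2)) = 1 from rfl, show ((1:ZMod 2)+(1:ZMod 2)) = 0 from rfl,
    show ((0:ZMod 2)).val = 0 from rfl, show ((1:ZMod 2)).val = 1 from rfl,
    mul_zero, zero_mul, pow_zero, pow_one, one_mul, mul_one, c0, c1]
  simp only [t0, t1]
  have h2 := hs; have h0 := hs0; have hI := Complex.I_sq
  field_simp
  linear_combination (0:ℂ)

lemma W1_11 : W1 1 1 = (((Real.sqrt 2 : ℝ) : ℂ))⁻¹ := by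
  rw [W1, sum_zmod2]
  simp only [show ((0:ZMod 2)+(1:ZMod 2)) = 1 from rfl, show ((1:ZMod 2)+(1:ZMod 2)) = 0 from rfl,
    show ((0:ZMod 2)).val = 0 from rfl, show ((1:ZMod 2)).val = 1 from rfl,
    mul_zero, zero_mul, pow_zero, pow_one, one_mul, mul_one, c0, c1]
  simp only [t0, t1]
  have h2 := hs; have h0 := hs0; have hI := Complex.I_sq
  field_simp
  linear_combination (-2 : ℂ) * hI

/-- single-qubit characteristic distribution -/
def g (p q : ZMod 2) : ℝ := (2:ℝ)⁻¹ * ‖W1 p q‖ ^ 2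

lemma absinv : ‖(((Real.sqrt 2 : ℝ) : ℂ))⁻¹‖ ^ 2 = (2:ℝ)⁻¹ := by
  rw [norm_inv, Complex.norm_real, Real.norm_of_nonneg (Real.sqrt_nonneg 2), inv_pow,
    Real.sq_sqrt (by norm_num : (2:ℝ) ≥ 0)]

lemma g00 : g 0 0 = 1/2 := by rw [g, W1_00]; norm_num
lemma g01 : g 0 1 = 0 := by rw [g, W1_01]; norm_num
lemma g10 : g 1 0 = 1/4 := by rw [g, W1_10, absinv]; norm_num
lemma g11 : g 1 1 = 1/4 := by rw [g, W1_11, absinv]; norm_num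

lemma charDist_T {m : ℕ} (x : BV m × BV m) :
    charDist (TstateM m) x = ∏ i, g (x.1 i) (x.2 i) := by
  rw [charDist, weylExp_Tstate, norm_prod, ← Finset.prod_pow,
    show ((2:ℝ)^m)⁻¹ = ∏ _i : Fin m, (2:ℝ)⁻¹ by simp [inv_pow],
    ← Finset.prod_mul_distrib]
  rfl

/-- single-qubit Fourier coefficient of `g` (times normalization) -/
def gh (p q : ZMod 2) : ℝ :=
  (4:ℝ)⁻¹ * ∑ ab : ZMod 2 × ZMod 2, g ab.1 ab.2 * (-1:ℝ) ^ (ab.1.val * p.val + ab.2.val * q.val)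

lemma bF_T {m : ℕ} (s : BV m × BV m) :
    booleanFourier (charDist (TstateM m)) s = ∏ i, gh (s.1 i) (s.2 i) := by
  rw [booleanFourier]
  have key : ∀ x : BV m × BV m,
      charDist (TstateM m) x * (-1:ℝ) ^ (bdot x.1 s.1 + bdot x.2 s.2)
      = ∏ i, (g (x.1 i) (x.2 i) *
          (-1:ℝ) ^ ((x.1 i).val * (s.1 i).val + (x.2 i).val * (s.2 i).val)) := by
    intro x
    rw [charDist_T,
      show bdot x.1 s.1 + bdot x.2 s.2
        = ∑ i, ((x.1 i).val * (s.1 i).val + (x.2 i).val * (s.2 i).val) by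
          rw [bdot_eq_sum, bdot_eq_sum, ← Finset.sum_add_distrib],
      ← Finset.prod_pow_eq_pow_sum, ← Finset.prod_mul_distrib]
  calc (4 ^ m : ℝ)⁻¹ * ∑ x : BV m × BV m,
        charDist (TstateM m) x * (-1:ℝ) ^ (bdot x.1 s.1 + bdot x.2 s.2)
      = (4 ^ m : ℝ)⁻¹ * ∑ x : BV m × BV m, ∏ i, (g (x.1 i) (x.2 i) *
          (-1:ℝ) ^ ((x.1 i).val * (s.1 i).val + (x.2 i).val * (s.2 i).val)) := by
        rw [Finset.sum_congr rfl fun x _ => key x]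
    _ = (4 ^ m : ℝ)⁻¹ * ∏ i : Fin m, ∑ ab : ZMod 2 × ZMod 2, (g ab.1 ab.2 *
          (-1:ℝ) ^ (ab.1.val * (s.1 i).val + ab.2.val * (s.2 i).val)) := by
        rw [sum_pair_prod (fun i ab => g ab.1 ab.2 *
          (-1:ℝ) ^ (ab.1.val * (s.1 i).val + ab.2.val * (s.2 i).val))]
    _ = ∏ i, gh (s.1 i) (s.2 i) := by
        rw [show ((4:ℝ)^m)⁻¹ = ∏ _i : Fin m, (4:ℝ)⁻¹ by simp [inv_pow],
          ← Finset.prod_mul_distrib]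
        rfl

lemma gh00 : gh 0 0 = 1/4 := by
  rw [gh, Fintype.sum_prod_type]
  simp only [sum_zmod2]
  norm_num [g00, g01, g10, g11,
    show ((0:ZMod 2)).val = 0 from rfl, show ((1:ZMod 2)).val = 1 from rfl]
lemma gh01 : gh 0 1 = 1/8 := by
  rw [gh, Fintype.sum_prod_type]
  simp only [sum_zmod2]
  norm_num [g00, g01, g10, g11,
    show ((0:ZMod 2)).val = 0 from rfl, show ((1:ZMod 2)).val = 1 from rfl]
lemma gh10 : gh 1 0 = 0 := by
  rw [gh, Fintype.sum_prod_type]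
  simp only [sum_zmod2]
  norm_num [g00, g01, g10, g11,
    show ((0:ZMod 2)).val = 0 from rfl, show ((1:ZMod 2)).val = 1 from rfl]
lemma gh11 : gh 1 1 = 1/8 := by
  rw [gh, Fintype.sum_prod_type]
  simp only [sum_zmod2]
  norm_num [g00, g01, g10, g11,
    show ((0:ZMod 2)).val = 0 from rfl, show ((1:ZMod 2)).val = 1 from rfl]

lemma gh_cube_sum : ∑ ab : ZMod 2 × ZMod 2, gh ab.1 ab.2 ^ 3 = 5/256 := by
  rw [Fintype.sum_prod_type]
  simp only [sum_zmod2]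
  norm_num [gh00, gh01, gh10, gh11]

lemma g_triple_sum : ∑ a : ZMod 2 × ZMod 2, ∑ b : ZMod 2 × ZMod 2,
    g b.1 b.2 * g (a.1 + b.1) (a.2 + b.2) * g a.1 a.2 = 5/16 := by
  rw [Fintype.sum_prod_type]
  simp only [Fintype.sum_prod_type, sum_zmod2]
  simp only [show ((0:ZMod 2)+(0:ZMod 2)) = 0 from rfl, show ((1:ZMod 2)+(0:ZMod 2)) = 1 from rfl,
    show ((0:ZMod 2)+(1:ZMod 2)) = 1 from rfl, show ((1:ZMod 2)+(1:ZMod 2)) = 0 from rfl]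
  norm_num [g00, g01, g10, g11]

end TproofAux
end

open TproofAux

/-- for ψ = |T⟩^{⊗m}, Σ_x p̂_ψ(x)³ = (5/256)^m and hence
η(ψ) = 2^m Σ_x q_ψ(x) p_ψ(x) = (5/8)^m. -/
theorem Tstate_fourier_cubed_and_eta (m : ℕ) (hm : 1 ≤ m) :
    (∑ x : BV m × BV m, booleanFourier (charDist (TstateM m)) x ^ 3 = (5 / 256 : ℝ) ^ m) ∧
    ((2 ^ m : ℝ) * ∑ x : BV m × BV m, weylDist (TstateM m) x * charDist (TstateM m) x =
      (5 / 8 : ℝ) ^ m) := by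
  constructor
  · calc ∑ x : BV m × BV m, booleanFourier (charDist (TstateM m)) x ^ 3
        = ∑ x : BV m × BV m, ∏ i, gh (x.1 i) (x.2 i) ^ 3 :=
          Finset.sum_congr rfl fun x _ => by rw [bF_T]; exact (Finset.prod_pow _ _ _).symm
      _ = ∏ _i : Fin m, ∑ ab : ZMod 2 × ZMod 2, gh ab.1 ab.2 ^ 3 :=
          sum_pair_prod (fun _i ab => gh ab.1 ab.2 ^ 3)
      _ = (5 / 256 : ℝ) ^ m := by rw [gh_cube_sum]; simp [div_pow]
  · have key : ∀ x : BV m × BV m, weylDist (TstateM m) x * charDist (TstateM m) x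
        = ∑ y : BV m × BV m, ∏ i, (g (y.1 i) (y.2 i) *
            g (x.1 i + y.1 i) (x.2 i + y.2 i) * g (x.1 i) (x.2 i)) := by
      intro x
      rw [weylDist, Finset.sum_mul]
      refine Finset.sum_congr rfl fun y _ => ?_
      rw [charDist_T, charDist_T, charDist_T, ← Finset.prod_mul_distrib,
        ← Finset.prod_mul_distrib]
      rfl
    calc (2 ^ m : ℝ) * ∑ x : BV m × BV m, weylDist (TstateM m) x * charDist (TstateM m) x
        = (2 ^ m : ℝ) * ∑ x : BV m × BV m, ∏ i, (∑ b : ZMod 2 × ZMod 2, g b.1 b.2 *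
            g (x.1 i + b.1) (x.2 i + b.2) * g (x.1 i) (x.2 i)) := by
          congr 1
          refine Finset.sum_congr rfl fun x _ => ?_
          rw [key x, sum_pair_prod (fun i b => g b.1 b.2 *
            g (x.1 i + b.1) (x.2 i + b.2) * g (x.1 i) (x.2 i))]
      _ = (2 ^ m : ℝ) * ∏ _i : Fin m, ∑ a : ZMod 2 × ZMod 2, ∑ b : ZMod 2 × ZMod 2,
            (g b.1 b.2 * g (a.1 + b.1) (a.2 + b.2) * g a.1 a.2) := by
          rw [sum_pair_prod (fun _i a => ∑ b : ZMod 2 × ZMod 2,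
            g b.1 b.2 * g (a.1 + b.1) (a.2 + b.2) * g a.1 a.2)]
      _ = (5 / 8 : ℝ) ^ m := by
          rw [g_triple_sum, Finset.prod_const]
          simp [← mul_pow]
          norm_num
end
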